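/- Pure-punishment risk-dominance threshold: assume T > R > P > S, ε ≥ 0, α = 0, and u > (T + P − R − S)/2. Then, under the punishment payoff matrix Π_P, the strategy ACD is risk-dominant against every one of the six strategies ADC, ADD, NCC, NCD, NDC, NDD if and only if ε < 2·min{T − S, R − P}. -/
import Mathlib


/-- A strategy in the commitment game: whether to accept a prior commitment
(`commit = true` means "A"), the action if a commitment is formed
(`inAct = true` means "C"), and the action if no commitment is formed
(`outAct = true` means "C"). -/
structure Strat where
  commit : Bool
  inAct : Bool
  outAct : Bool
deriving DecidableEq

def ACC : Strat := ⟨true, true, true⟩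
def ACD : Strat := ⟨true, true, false⟩
def ADC : Strat := ⟨true, false, true⟩
def ADD : Strat := ⟨true, false, false⟩
def NCC : Strat := ⟨false, true, true⟩
def NCD : Strat := ⟨false, true, false⟩
def NDC : Strat := ⟨false, false, true⟩
def NDD : Strat := ⟨false, false, false⟩

/-- Row player's payoff in the one-shot Prisoner's Dilemma with payoffs
`T, R, P, S`; `true` codes cooperation. -/
def pd (T R P S : ℝ) (myC otherC : Bool) : ℝ :=
  if myC then (if otherC then R else S) else (if otherC then T else P)

/-- The reward payoff matrix `Π_R`: the row player receives its PD payoff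
(commitment formed iff both commit; then each pays `ε/2` and plays its
in-commitment action, otherwise both play their no-commitment actions),
plus `α·u` if it accepted the commitment, plus an additional `(1−α)·u`
if a commitment is formed and it cooperates in it. -/
noncomputable def payR (T R P S ε u α : ℝ) (s t : Strat) : ℝ :=
  (if s.commit ∧ t.commit then
      pd T R P S s.inAct t.inAct - ε / 2 + (if s.inAct then (1 - α) * u else 0)
   else pd T R P S s.outAct t.outAct)
  + (if s.commit then α * u else 0)

/-- The punishment payoff matrix `Π_P`: as `Π_R` except that instead of the
reward `(1−α)·u` for compliance, the amount `(1−α)·u` is subtracted when a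
commitment is formed and the row player defects in it. -/
noncomputable def payP (T R P S ε u α : ℝ) (s t : Strat) : ℝ :=
  (if s.commit ∧ t.commit then
      pd T R P S s.inAct t.inAct - ε / 2 - (if s.inAct then 0 else (1 - α) * u)
   else pd T R P S s.outAct t.outAct)
  + (if s.commit then α * u else 0)

/-- Flip the participation decision of a strategy (A ↔ N). -/
def flipPart (s : Strat) : Strat := ⟨!s.commit, s.inAct, s.outAct⟩

/-- The noisy payoff matrix `Π̃`: with probability `χ` each player independently
errs in its decision whether to join the commitment. -/
noncomputable def noisy (χ : ℝ) (M : Strat → Strat → ℝ) (s t : Strat) : ℝ :=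
  (1 - χ) ^ 2 * M s t + χ * (1 - χ) * (M (flipPart s) t + M s (flipPart t))
    + χ ^ 2 * M (flipPart s) (flipPart t)

/-- Strategy `a` is risk-dominant against strategy `b` under payoff matrix `Π`. -/
def RiskDom (M : Strat → Strat → ℝ) (a b : Strat) : Prop :=
  M a a + M a b > M b a + M b b

/-- `x` is an evolutionarily stable strategy (ESS) of the payoff matrix `Π`. -/
def IsESS (M : Strat → Strat → ℝ) (x : Strat) : Prop :=
  ∀ y : Strat, y ≠ x → M x x > M y x ∨ (M x x = M y x ∧ M x y > M y y)

/-- **Pure-punishment risk-dominance threshold.**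
Assume `T > R > P > S`, `ε ≥ 0`, `α = 0`, and `u > (T + P − R − S)/2`. Under the
punishment matrix `Π_P`, ACD is risk-dominant against each of ADC, ADD, NCC, NCD,
NDC, NDD iff `ε < 2·min{T − S, R − P}`. -/
theorem pure_punishment_threshold (T R P S ε u : ℝ)
    (hTR : T > R) (hRP : R > P) (hPS : P > S) (hε : 0 ≤ ε)
    (hu : u > (T + P - R - S) / 2) :
    (∀ B ∈ ({ADC, ADD, NCC, NCD, NDC, NDD} : Set Strat),
        RiskDom (payP T R P S ε u 0) ACD B)
      ↔ ε < 2 * min (T - S) (R - P) := by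
  have hmin : ε < 2 * min (T - S) (R - P) ↔ ε < 2 * (T - S) ∧ ε < 2 * (R - P) := by
    rw [mul_min_of_nonneg _ _ (by norm_num : (0:ℝ) ≤ 2), lt_min_iff]
  rw [hmin]
  constructor
  · intro h
    have h1 := h NCC (by simp)
    have h2 := h NCD (by simp)
    simp only [RiskDom, payP, pd, ACD, NCC, NCD] at h1 h2
    norm_num at h1 h2
    constructor <;> linarith
  · intro h B hB
    obtain ⟨h1, h2⟩ := h
    simp only [Set.mem_insert_iff, Set.mem_singleton_iff] at hB
    rcases hB with rfl | rfl | rfl | rfl | rfl | rfl <;>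
      · simp only [RiskDom, payP, pd, ACD, ADC, ADD, NCC, NCD, NDC, NDD]
        norm_num
        linarith
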